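/- For any integer n ≥ 2, we have 3·⌈√(n/3)⌉ ≥ ⌈n / ⌈√(n/3)⌉⌉. -/

import Mathlib

theorem stmt_2 (n : ℕ) (hn : 2 ≤ n) :
    ⌈(n : ℚ) / ((⌈Real.sqrt ((n : ℝ) / 3)⌉ : ℤ) : ℚ)⌉ ≤ 3 * ⌈Real.sqrt ((n : ℝ) / 3)⌉ := by
  set c : ℤ := ⌈Real.sqrt ((n : ℝ) / 3)⌉ with hc
  have hn3 : (0:ℝ) < (n:ℝ) / 3 := by positivity
  have hs : (0:ℝ) < Real.sqrt ((n:ℝ)/3) := Real.sqrt_pos.mpr hn3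
  have hc0 : 0 < c := Int.ceil_pos.mpr hs
  have hle : Real.sqrt ((n:ℝ)/3) ≤ (c:ℝ) := Int.le_ceil _
  have hsq : (n:ℝ)/3 ≤ (c:ℝ)^2 := by
    calc (n:ℝ)/3 = Real.sqrt ((n:ℝ)/3) ^ 2 := (Real.sq_sqrt hn3.le).symm
    _ ≤ (c:ℝ)^2 := by
        apply pow_le_pow_left₀ hs.le hle
  have hR : (n:ℝ) ≤ 3 * (c:ℝ) * (c:ℝ) := by nlinarith
  have hQ : (n:ℚ) ≤ ((3*c : ℤ) : ℚ) * (c:ℚ) := by push_cast; have h' : ((n:ℤ):ℚ) ≤ ((3*c*c : ℤ):ℚ) := Int.cast_le.mpr (by exact_mod_cast hR); push_cast at h'; exact h'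
  have hcQ : (0:ℚ) < (c:ℚ) := by exact_mod_cast hc0
  rw [Int.ceil_le]
  rw [div_le_iff₀ hcQ]
  push_cast
  push_cast at hQ
  linarith
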